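/- Let α be a real number with α ≥ 1. For all complex numbers z, w with |z| < 1 and |w| < 1, the function F(z,w) = (1 - z·w)^(-α) (complex power, principal branch) satisfies deriv (fun ζ => (1 - ζ·w)^(-α)) z = w² · deriv (fun ξ => (1 - z·ξ)^(-α)) w + α · w · (1 - z·w)^(-α). -/

import Mathlib

open ComplexConjugate Complex

theorem halpha_kernel_pde (α : ℝ) (hα : 1 ≤ α) (z w : ℂ)
    (hz : ‖z‖ < 1) (hw : ‖w‖ < 1) :
    deriv (fun ζ : ℂ => (1 - ζ * w) ^ (-(α : ℂ))) z
      = w ^ 2 * deriv (fun ξ : ℂ => (1 - z * ξ) ^ (-(α : ℂ))) w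
        + (α : ℂ) * w * (1 - z * w) ^ (-(α : ℂ)) := by
  have habs : ‖z * w‖ < 1 := by
    rw [norm_mul]
    calc ‖z‖ * ‖w‖ ≤ ‖z‖ * 1 :=
          mul_le_mul_of_nonneg_left hw.le (norm_nonneg z)
      _ = ‖z‖ := mul_one _
      _ < 1 := hz
  have hre : 0 < (1 - z * w).re := by
    have := Complex.abs_re_le_norm (z * w)
    have h1 : (z * w).re < 1 := lt_of_le_of_lt (le_trans (le_abs_self _) this) habs
    have : (1 - z * w).re = 1 - (z * w).re := by simp [Complex.sub_re]
    rw [this]; linarith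
  have hne : (1 : ℂ) - z * w ≠ 0 := by
    intro h
    rw [h] at hre
    simp at hre
  have h1 : HasDerivAt (fun ζ : ℂ => (1 - ζ * w) ^ (-(α : ℂ)))
      ((-(α : ℂ)) * (1 - z * w) ^ (-(α : ℂ) - 1) * (-w)) z := by
    have hf : HasDerivAt (fun ζ : ℂ => 1 - ζ * w) (-w) z := by
      simpa using ((hasDerivAt_id z).mul_const w).const_sub 1
    exact hf.cpow_const (Or.inl hre)
  have h2 : HasDerivAt (fun ξ : ℂ => (1 - z * ξ) ^ (-(α : ℂ)))
      ((-(α : ℂ)) * (1 - z * w) ^ (-(α : ℂ) - 1) * (-z)) w := by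
    have hf : HasDerivAt (fun ξ : ℂ => 1 - z * ξ) (-z) w := by
      simpa using ((hasDerivAt_id w).const_mul z).const_sub 1
    exact hf.cpow_const (Or.inl hre)
  rw [h1.deriv, h2.deriv]
  have key : (1 - z * w) ^ (-(α : ℂ)) = (1 - z * w) ^ (-(α : ℂ) - 1) * (1 - z * w) := by
    rw [Complex.cpow_sub _ _ hne, Complex.cpow_one, div_mul_cancel₀ _ hne]
  rw [key]
  ring
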